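/- Let T and Q be non-zero polynomials in K[x,y], both divisible by x - y, such that T(x,y)·T(y,x) = Q(x,y)·Q(y,x). Then there exist polynomials φ, ψ ∈ K[x,y] with T(x,y) = φ(x,y)·ψ(x,y) and Q(x,y) = φ(x,y)·ψ(y,x). -/

import Mathlib

open MvPolynomial

/-- The automorphism of `K[x,y]` swapping the two variables. -/
noncomputable def s2 {K : Type*} [Field K] :
    MvPolynomial (Fin 2) K →ₐ[K] MvPolynomial (Fin 2) K :=
  rename (Equiv.swap 0 1)

lemma s2_s2 {K : Type*} [Field K] (p : MvPolynomial (Fin 2) K) : s2 (s2 p) = p := by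
  show rename _ (rename _ p) = p
  rw [rename_rename]
  have : (⇑(Equiv.swap (0 : Fin 2) 1)) ∘ (⇑(Equiv.swap (0 : Fin 2) 1)) = id := by
    ext i; simp
  rw [this, rename_id, AlgHom.id_apply]

lemma s2_inj {K : Type*} [Field K] : Function.Injective (s2 (K := K)) := by
  intro a b h
  have := congrArg s2 h
  rwa [s2_s2, s2_s2] at this

lemma s2_prime {K : Type*} [Field K] {p : MvPolynomial (Fin 2) K} (hp : Prime p) :
    Prime (s2 p) :=
  (MulEquiv.prime_iff (renameEquiv K (Equiv.swap (0 : Fin 2) 1))).mpr hp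

lemma s2_ne_zero {K : Type*} [Field K] {p : MvPolynomial (Fin 2) K} (hp : p ≠ 0) :
    s2 p ≠ 0 := fun h => hp (by rw [← s2_s2 p, h, map_zero])

lemma unit_eq_C {K : Type*} [Field K] {u : MvPolynomial (Fin 2) K} (h : IsUnit u) :
    ∃ c : K, u = C c := by
  have e1 := MvPolynomial.finSuccEquiv K 1
  have h1 : IsUnit (MvPolynomial.finSuccEquiv K 1 u) := h.map _
  obtain ⟨r, hr, hrC⟩ := Polynomial.isUnit_iff.mp h1
  have h0 : IsUnit (MvPolynomial.finSuccEquiv K 0 r) := hr.map _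
  obtain ⟨r0, hr0, hr0C⟩ := Polynomial.isUnit_iff.mp h0
  obtain ⟨c, hc⟩ : ∃ c : K, r0 = MvPolynomial.C c := ⟨_, r0.eq_C_of_isEmpty⟩
  have hrc : r = MvPolynomial.C c := by
    apply (MvPolynomial.finSuccEquiv K 0).injective
    rw [← hr0C, hc]
    simp [MvPolynomial.finSuccEquiv_apply]
  refine ⟨c, ?_⟩
  apply (MvPolynomial.finSuccEquiv K 1).injective
  rw [← hrC, hrc]
  simp [MvPolynomial.finSuccEquiv_apply]

lemma key_decomp {K : Type*} [Field K] (T : MvPolynomial (Fin 2) K) :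
    ∀ Q : MvPolynomial (Fin 2) K, T ≠ 0 → Q ≠ 0 → T * s2 T = Q * s2 Q →
      ∃ φ ψ u : MvPolynomial (Fin 2) K, IsUnit u ∧ T = φ * ψ ∧ Q = u * φ * s2 ψ := by
  refine UniqueFactorizationMonoid.induction_on_prime T ?_ ?_ ?_
  · intro Q hT _ _; exact absurd rfl hT
  · intro x hx Q _ hQ heq
    have hsx : IsUnit (s2 x) := hx.map s2
    obtain ⟨v, hv⟩ := hsx.exists_right_inv
    have hQu : IsUnit Q := by
      have : IsUnit (Q * s2 Q) := by rw [← heq]; exact hx.mul hsx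
      exact isUnit_of_mul_isUnit_left this
    refine ⟨1, x, Q * v, hQu.mul (IsUnit.of_mul_eq_one (s2 x) (by rw [mul_comm]; exact hv)),
      (one_mul x).symm, ?_⟩
    calc Q = Q * (s2 x * v) := by rw [hv, mul_one]
    _ = Q * v * 1 * s2 x := by ring
  · intro a p ha hp IH Q hpa hQ heq
    have hpne : p ≠ 0 := hp.ne_zero
    have hane : a ≠ 0 := fun h => hpa (by rw [h, mul_zero])
    have hspne : s2 p ≠ 0 := s2_ne_zero hpne
    have hdvd : p ∣ Q * s2 Q := by
      rw [← heq, map_mul]; exact ⟨a * (s2 p * s2 a), by ring⟩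
    rcases hp.2.2 _ _ hdvd with hd | hd
    · obtain ⟨Q', rfl⟩ := hd
      have hQ' : Q' ≠ 0 := fun h => hQ (by rw [h, mul_zero])
      have heq' : a * s2 a = Q' * s2 Q' := by
        apply mul_left_cancel₀ (mul_ne_zero hpne hspne)
        have h1 : p * a * s2 (p * a) = p * s2 p * (a * s2 a) := by rw [map_mul]; ring
        have h2 : p * Q' * s2 (p * Q') = p * s2 p * (Q' * s2 Q') := by rw [map_mul]; ring
        rw [← h1, ← h2, heq]
      obtain ⟨φ, ψ, u, hu, h1, h2⟩ := IH Q' hane hQ' heq'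
      exact ⟨p * φ, ψ, u, hu, by rw [h1]; ring, by rw [h2]; ring⟩
    · obtain ⟨Q', hQ'eq⟩ : s2 p ∣ Q := by
        obtain ⟨c, hc⟩ := hd
        exact ⟨s2 c, by rw [← s2_s2 Q, hc, map_mul]⟩
      subst hQ'eq
      have hQ' : Q' ≠ 0 := fun h => hQ (by rw [h, mul_zero])
      have heq' : a * s2 a = Q' * s2 Q' := by
        apply mul_left_cancel₀ (mul_ne_zero hpne hspne)
        have h1 : p * a * s2 (p * a) = p * s2 p * (a * s2 a) := by rw [map_mul]; ring
        have h2 : s2 p * Q' * s2 (s2 p * Q') = p * s2 p * (Q' * s2 Q') := by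
          rw [map_mul, s2_s2]; ring
        rw [← h1, ← h2, heq]
      obtain ⟨φ, ψ, u, hu, h1, h2⟩ := IH Q' hane hQ' heq'
      refine ⟨φ, p * ψ, u, hu, by rw [h1]; ring, ?_⟩
      rw [h2, map_mul]; ring

/-- If `T` and `Q` are non-zero polynomials in `K[x,y]`, both divisible by
`x - y`, with `T·sT = Q·sQ`, then there exist `φ, ψ` with `T = φ·ψ` and
`Q = φ·sψ`. -/
theorem eq_sym_product_decomposition {K : Type*} [Field K]
    (T Q : MvPolynomial (Fin 2) K)
    (hT : T ≠ 0) (hQ : Q ≠ 0)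
    (hdvdT : (X 0 - X 1) ∣ T) (hdvdQ : (X 0 - X 1) ∣ Q)
    (hprod : T * s2 T = Q * s2 Q) :
    ∃ φ ψ : MvPolynomial (Fin 2) K, T = φ * ψ ∧ Q = φ * s2 ψ := by
  set D : MvPolynomial (Fin 2) K := X 0 - X 1 with hD
  obtain ⟨T₁, hT1⟩ := hdvdT
  obtain ⟨Q₁, hQ1⟩ := hdvdQ
  have hDT1 := hT; rw [hT1, mul_ne_zero_iff] at hDT1
  have hDQ1 := hQ; rw [hQ1, mul_ne_zero_iff] at hDQ1
  obtain ⟨hDne, hT1ne⟩ := hDT1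
  obtain ⟨-, hQ1ne⟩ := hDQ1
  have hsD : s2 D = -D := by
    rw [hD]
    show rename _ _ = _
    rw [map_sub, rename_X, rename_X, Equiv.swap_apply_left, Equiv.swap_apply_right]
    ring
  have heq1 : T₁ * s2 T₁ = Q₁ * s2 Q₁ := by
    apply mul_left_cancel₀ (mul_ne_zero hDne (s2_ne_zero hDne))
    have h1 : T * s2 T = D * s2 D * (T₁ * s2 T₁) := by rw [hT1, map_mul]; ring
    have h2 : Q * s2 Q = D * s2 D * (Q₁ * s2 Q₁) := by rw [hQ1, map_mul]; ring
    rw [← h1, ← h2, hprod]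
  obtain ⟨φ, ψ, u, hu, hφψ, hQdec⟩ := key_decomp T₁ Q₁ hT1ne hQ1ne heq1
  have hXne : φ * ψ * (s2 φ * s2 ψ) ≠ 0 := by
    rw [← map_mul, ← hφψ]
    exact mul_ne_zero hT1ne (s2_ne_zero hT1ne)
  have husu : u * s2 u = 1 := by
    apply mul_left_cancel₀ hXne
    rw [hφψ, hQdec, map_mul, map_mul, map_mul, s2_s2] at heq1
    linear_combination -heq1
  obtain ⟨c, hc⟩ := unit_eq_C hu
  have hsu : s2 u = u := by rw [hc]; show rename _ _ = _; rw [rename_C]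
  rw [hsu] at husu
  rcases mul_self_eq_one_iff.mp husu with h1 | h1
  · exact ⟨D * φ, ψ, by rw [hT1, hφψ]; ring, by rw [hQ1, hQdec, h1]; ring⟩
  · refine ⟨φ, D * ψ, by rw [hT1, hφψ]; ring, ?_⟩
    rw [hQ1, hQdec, h1, map_mul, hsD]; ring
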